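/- Let D be a C*-algebra and let C ⊆ D be a closed star-subalgebra. Then for every selfadjoint x ∈ C, Metric.infDist x {c ∈ C : 0 ≤ c} = Metric.infDist x {d ∈ D : 0 ≤ d}; that is, the inclusion C ⊆ D is a gauge maximal inclusion. (Note that for x ∈ C, 0 ≤ x in C if and only if 0 ≤ x in D, by spectral permanence.) -/

import Mathlib

open scoped ComplexOrder

-- key norm lemma: distance from selfadjoint x to any nonneg d is at least ‖x⁻‖
lemma aux_negPart_norm_le {D : Type*} [NonUnitalCStarAlgebra D] [PartialOrder D]
    [StarOrderedRing D] (x d : D) (hx : IsSelfAdjoint x) (hd : 0 ≤ d) :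
    ‖x⁻‖ ≤ ‖x - d‖ := by
  set e := x⁻ with he_def
  have he : 0 ≤ e := CFC.negPart_nonneg x
  have hesa : IsSelfAdjoint e := he.isSelfAdjoint
  have hex : e * x = -(e * e) := by
    conv_lhs => rw [← CFC.posPart_sub_negPart x hx]
    rw [mul_sub, ← he_def, CFC.negPart_mul_posPart, zero_sub]
  have key : e * e * e ≤ e * (d - x) * e := by
    have h1 : e * (d - x) * e = e * d * e + e * e * e := by
      rw [mul_sub, sub_mul, hex, neg_mul, sub_neg_eq_add]
    have h2 : 0 ≤ e * d * e := by
      simpa [hesa.star_eq] using star_left_conjugate_nonneg hd e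
    rw [h1]
    exact le_add_of_nonneg_left h2
  have h3 : ‖e * e * e‖ ≤ ‖e * (d - x) * e‖ := by
    refine CStarAlgebra.norm_le_norm_of_nonneg_of_le ?_ key
    simpa [hesa.star_eq] using star_left_conjugate_nonneg he e
  have h4 : ‖e * (d - x) * e‖ ≤ ‖e‖ * ‖d - x‖ * ‖e‖ :=
    (norm_mul_le _ _).trans (by gcongr; exact norm_mul_le _ _)
  have h2 : ‖e * e‖ = ‖e‖ ^ 2 := by
    have := CStarRing.norm_star_mul_self (x := e)
    rw [hesa.star_eq] at this
    rw [this, pow_two]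
  have h5 : ‖e‖ ^ 3 ≤ ‖e * e * e‖ := by
    rcases eq_or_ne e 0 with h | h
    · simp [h]
    · have hnorm : 0 < ‖e‖ := norm_pos_iff.mpr h
      have h4' : ‖(e * e) * (e * e)‖ = ‖e‖ ^ 4 := by
        have := CStarRing.norm_star_mul_self (x := e * e)
        have hsa2 : star (e * e) = e * e := by rw [star_mul, hesa.star_eq]
        rw [hsa2] at this
        rw [this, h2]; ring
      have hle : ‖e‖ ^ 4 ≤ ‖e‖ * ‖e * e * e‖ := by
        calc ‖e‖ ^ 4 = ‖(e * e) * (e * e)‖ := h4'.symm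
          _ = ‖e * (e * e * e)‖ := by rw [mul_assoc, ← mul_assoc e e e]
          _ ≤ ‖e‖ * ‖e * e * e‖ := norm_mul_le _ _
      have := (mul_le_mul_iff_right₀ hnorm).mp (by
        calc ‖e‖ * ‖e‖ ^ 3 = ‖e‖ ^ 4 := by ring
          _ ≤ ‖e‖ * ‖e * e * e‖ := hle)
      exact this
  have hnd : ‖d - x‖ = ‖x - d‖ := by rw [← norm_neg]; congr 1; abel
  rcases eq_or_ne e 0 with h | h
  · rw [h]; simpa using norm_nonneg (x - d)
  · have hnorm : 0 < ‖e‖ := norm_pos_iff.mpr h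
    have hfin : ‖e‖ ^ 2 * ‖e‖ ≤ ‖e‖ ^ 2 * ‖x - d‖ := by
      calc ‖e‖ ^ 2 * ‖e‖ = ‖e‖ ^ 3 := by ring
        _ ≤ ‖e * e * e‖ := h5
        _ ≤ ‖e‖ * ‖d - x‖ * ‖e‖ := h3.trans h4
        _ = ‖e‖ ^ 2 * ‖x - d‖ := by rw [hnd]; ring
    exact (mul_le_mul_iff_right₀ (by positivity)).mp hfin

lemma aux_posPart_mem {D : Type*} [NonUnitalCStarAlgebra D] [PartialOrder D]
    [StarOrderedRing D] (C : NonUnitalStarSubalgebra ℂ D) (hC : IsClosed (C : Set D))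
    (x : D) (hxC : x ∈ C) (hx : IsSelfAdjoint x) : x⁺ ∈ C := by
  haveI : IsClosed ((C : Set D)) := hC
  set y : C := ⟨x, hxC⟩ with hy_def
  have hy : IsSelfAdjoint y := by
    rw [IsSelfAdjoint, Subtype.ext_iff]
    exact hx
  have key := (NonUnitalStarSubalgebraClass.subtype C).map_cfcₙ (S := ℂ)
    (·⁺ : ℝ → ℝ) y (by fun_prop) (by simp) (by fun_prop) hy hx
  have hx' : ((NonUnitalStarSubalgebraClass.subtype C) y : D) = x := rfl
  rw [hx'] at key
  rw [CFC.posPart_def, ← key]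
  exact (y⁺).property

theorem stmt_5 {D : Type*} [NonUnitalCStarAlgebra D] [PartialOrder D] [StarOrderedRing D]
    (C : NonUnitalStarSubalgebra ℂ D) (hC : IsClosed (C : Set D))
    (x : D) (hxC : x ∈ C) (hx : IsSelfAdjoint x) :
    Metric.infDist x {c : D | c ∈ C ∧ 0 ≤ c} = Metric.infDist x {d : D | 0 ≤ d} := by
  have hCne : ({c : D | c ∈ C ∧ 0 ≤ c}).Nonempty := ⟨0, C.zero_mem, le_refl 0⟩
  have hDne : ({d : D | 0 ≤ d}).Nonempty := ⟨0, le_refl 0⟩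
  refine le_antisymm ?_ (Metric.infDist_le_infDist_of_subset (fun c hc => hc.2) hCne)
  have h1 : Metric.infDist x {c : D | c ∈ C ∧ 0 ≤ c} ≤ ‖x⁻‖ := by
    have hmem : x⁺ ∈ {c : D | c ∈ C ∧ 0 ≤ c} :=
      ⟨aux_posPart_mem C hC x hxC hx, CFC.posPart_nonneg x⟩
    have hdist : dist x x⁺ = ‖x⁻‖ := by
      have hsub : x - x⁺ = -x⁻ := by
        nth_rewrite 1 [← CFC.posPart_sub_negPart x hx]
        abel
      rw [dist_eq_norm, hsub, norm_neg]
    exact hdist ▸ Metric.infDist_le_dist_of_mem hmem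
  refine h1.trans (le_of_not_gt fun hlt => ?_)
  obtain ⟨d, hd, hdlt⟩ := (Metric.infDist_lt_iff hDne).mp hlt
  rw [dist_eq_norm] at hdlt
  exact absurd (aux_negPart_norm_le x d hx hd) (not_le.mpr hdlt)
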